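/- Let l = r = 1 and suppose d ≥ 0, c ≥ 0 and Assumptions 1–2 hold. Then the primal projection interval Θ_P ⊆ ℝ contains at most n transition points and at most n invariancy intervals. -/

import Mathlib

open Matrix

/-- Assumption 1 in the case `r = 1`, with `M` a single row vector `Mv`:
the row spaces of `A`, `B` and the span of `Mv` are pairwise orthogonal
and their sum is all of `ℝⁿ`. -/
def Assumption1R {m l n : ℕ} (A : Matrix (Fin m) (Fin n) ℝ)
    (B : Matrix (Fin l) (Fin n) ℝ) (Mv : Fin n → ℝ) : Prop :=
  (∀ wa wb, (Aᵀ *ᵥ wa) ⬝ᵥ (Bᵀ *ᵥ wb) = 0) ∧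
  (∀ wa, (Aᵀ *ᵥ wa) ⬝ᵥ Mv = 0) ∧
  (∀ wb, (Bᵀ *ᵥ wb) ⬝ᵥ Mv = 0) ∧
  (LinearMap.range (Aᵀ).mulVecLin ⊔ LinearMap.range (Bᵀ).mulVecLin ⊔
      (Submodule.span ℝ {Mv}) = ⊤)

/-- Optimality for the LP `min ⟨cost, x⟩ s.t. Ax = Ad, x ≥ 0`. -/
def OptimalFor {m n : ℕ} (A : Matrix (Fin m) (Fin n) ℝ) (d cost x : Fin n → ℝ) : Prop :=
  A *ᵥ x = A *ᵥ d ∧ 0 ≤ x ∧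
    ∀ x' : Fin n → ℝ, A *ᵥ x' = A *ᵥ d → 0 ≤ x' → cost ⬝ᵥ x ≤ cost ⬝ᵥ x'

/-- The primal projection interval `Θ_P ⊆ ℝ` (case `r = 1`). -/
def ThetaPR {m n : ℕ} (A : Matrix (Fin m) (Fin n) ℝ) (Mv d : Fin n → ℝ) : Set ℝ :=
  {v | ∃ x : Fin n → ℝ, 0 ≤ x ∧ A *ᵥ x = A *ᵥ d ∧ Mv ⬝ᵥ x = Mv ⬝ᵥ d + v}

/-- The dual projection interval `Θ_D ⊆ ℝ` (case `r = 1`). -/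
def ThetaDR {l n : ℕ} (B : Matrix (Fin l) (Fin n) ℝ) (Mv c : Fin n → ℝ) : Set ℝ :=
  {u | ∃ y : Fin n → ℝ, 0 ≤ y ∧ B *ᵥ y = B *ᵥ c ∧ Mv ⬝ᵥ y = Mv ⬝ᵥ c + u}

/-- `Φ(u) ⊆ ℝ` (case `r = 1`). -/
def PhiR {m n : ℕ} (A : Matrix (Fin m) (Fin n) ℝ) (Mv c d : Fin n → ℝ) (u : ℝ) : Set ℝ :=
  {v | ∃ x : Fin n → ℝ, OptimalFor A d (c + u • Mv) x ∧ v = Mv ⬝ᵥ (x - d)}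

/-- `Ψ(v) ⊆ ℝ` (case `r = 1`). -/
def PsiR {l n : ℕ} (B : Matrix (Fin l) (Fin n) ℝ) (Mv c d : Fin n → ℝ) (v : ℝ) : Set ℝ :=
  {u | ∃ y : Fin n → ℝ, OptimalFor B c (d + v • Mv) y ∧ u = Mv ⬝ᵥ (y - c)}

/-- The set of parameters `v` for which the parametric KKT conditions (with dual
parameter `u`) admit a solution pair `(x̄, ȳ)`. -/
def KKTSet {m l n : ℕ} (A : Matrix (Fin m) (Fin n) ℝ) (B : Matrix (Fin l) (Fin n) ℝ)
    (Mv c d : Fin n → ℝ) (u : ℝ) : Set ℝ :=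
  {v | ∃ xb yb : Fin n → ℝ,
    A *ᵥ xb = A *ᵥ d ∧ Mv ⬝ᵥ xb = Mv ⬝ᵥ d + v ∧ 0 ≤ xb ∧
    B *ᵥ yb = B *ᵥ c ∧ Mv ⬝ᵥ yb = Mv ⬝ᵥ c + u ∧ 0 ≤ yb ∧
    xb ⬝ᵥ yb = 0}

/-- A transition point of `Θ_P`: a parameter `v ∈ Θ_P` for which `Ψ(v)` is not a
singleton. -/
def IsTransitionPoint {m l n : ℕ} (A : Matrix (Fin m) (Fin n) ℝ)
    (B : Matrix (Fin l) (Fin n) ℝ) (Mv c d : Fin n → ℝ) (v : ℝ) : Prop :=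
  v ∈ ThetaPR A Mv d ∧ ¬ ∃ u : ℝ, PsiR B Mv c d v = {u}

/-- An invariancy interval of `Θ_P`: a maximal open interval contained in `Θ_P`
on which `Ψ` is constant. -/
def IsInvariancyInterval {m l n : ℕ} (A : Matrix (Fin m) (Fin n) ℝ)
    (B : Matrix (Fin l) (Fin n) ℝ) (Mv c d : Fin n → ℝ) (a b : ℝ) : Prop :=
  (a < b ∧ Set.Ioo a b ⊆ ThetaPR A Mv d ∧
      ∀ v1 ∈ Set.Ioo a b, ∀ v2 ∈ Set.Ioo a b, PsiR B Mv c d v1 = PsiR B Mv c d v2) ∧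
    ∀ a' b' : ℝ, a' ≤ a → b ≤ b' →
      (a' < b' ∧ Set.Ioo a' b' ⊆ ThetaPR A Mv d ∧
        ∀ v1 ∈ Set.Ioo a' b', ∀ v2 ∈ Set.Ioo a' b', PsiR B Mv c d v1 = PsiR B Mv c d v2) →
      a' = a ∧ b' = b

namespace ThetaPAux

variable {n : ℕ}


variable {n : ℕ}

/-- Standard basis vector. -/
def e (i : Fin n) : Fin n → ℝ := fun j => if j = i then 1 else 0

lemma e_nonneg (i : Fin n) : 0 ≤ e i := fun j => by
  simp only [e, Pi.zero_apply]; split <;> norm_num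

lemma dp_e (v : Fin n → ℝ) (i : Fin n) : v ⬝ᵥ e i = v i := by
  simp [e, dotProduct, mul_ite, Finset.sum_ite_eq']

lemma dp_smul_e (v : Fin n → ℝ) (a : ℝ) (i : Fin n) : v ⬝ᵥ (a • e i) = a * v i := by
  rw [dotProduct_smul, dp_e, smul_eq_mul]

/-- Feasibility for the scalar-constraint LP. -/
def SFeas (β c y : Fin n → ℝ) : Prop := 0 ≤ y ∧ β ⬝ᵥ y = β ⬝ᵥ c

/-- Optimality for the scalar-constraint LP with cost `d + v • Mv`. -/
def SOpt (β Mv c d : Fin n → ℝ) (v : ℝ) (y : Fin n → ℝ) : Prop :=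
  SFeas β c y ∧ ∀ y', SFeas β c y' → (d + v • Mv) ⬝ᵥ y ≤ (d + v • Mv) ⬝ᵥ y'

lemma dp_add_smul (u v w : Fin n → ℝ) (t : ℝ) :
    (v + t • w) ⬝ᵥ u = v ⬝ᵥ u + t * (w ⬝ᵥ u) := by
  rw [add_dotProduct, smul_dotProduct, smul_eq_mul]

lemma ord {β Mv c d : Fin n → ℝ} {v v' : ℝ} {y y' : Fin n → ℝ}
    (hy : SOpt β Mv c d v y) (hy' : SOpt β Mv c d v' y') (hvv : v < v') :
    Mv ⬝ᵥ y' ≤ Mv ⬝ᵥ y := by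
  have h1 := hy.2 y' hy'.1
  have h2 := hy'.2 y hy.1
  rw [dp_add_smul, dp_add_smul] at h1 h2
  nlinarith

lemma opt_cost_eq {β Mv c d : Fin n → ℝ} {v : ℝ} {y y' : Fin n → ℝ}
    (hy : SOpt β Mv c d v y) (hy' : SOpt β Mv c d v y') :
    (d + v • Mv) ⬝ᵥ y = (d + v • Mv) ⬝ᵥ y' :=
  le_antisymm (hy.2 y' hy'.1) (hy'.2 y hy.1)

lemma wd {β g : Fin n → ℝ} {ρ : ℝ} (hρ : ∀ i, ρ * β i ≤ g i) {y : Fin n → ℝ} (hy : 0 ≤ y) :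
    ρ * (β ⬝ᵥ y) ≤ g ⬝ᵥ y := by
  rw [dotProduct, dotProduct, Finset.mul_sum]
  exact Finset.sum_le_sum fun i _ => by
    rw [← mul_assoc]; exact mul_le_mul_of_nonneg_right (hρ i) (hy i)

lemma no_lower (L base slope : ℝ) (hs : slope < 0) :
    ∃ t : ℝ, 0 ≤ t ∧ base + t * slope < L := by
  rcases le_or_gt ((L - base - 1) / slope) 0 with h | h
  · refine ⟨0, le_rfl, ?_⟩
    have : 0 ≤ L - base - 1 := by
      by_contra hcon
      push_neg at hcon
      have := div_pos_of_neg_of_neg hcon hs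
      linarith
    linarith
  · refine ⟨(L - base - 1) / slope, h.le, ?_⟩
    have : (L - base - 1) / slope * slope = L - base - 1 := div_mul_cancel₀ _ (ne_of_lt hs)
    linarith

lemma sd_pos (β c g : Fin n → ℝ) (hc : 0 ≤ c) (hb0 : 0 ≤ β ⬝ᵥ c)
    (hbdd : ∃ L, ∀ y, SFeas β c y → L ≤ g ⬝ᵥ y) :
    ∃ ρ, (∀ i, ρ * β i ≤ g i) ∧ ∃ y₀, SFeas β c y₀ ∧ g ⬝ᵥ y₀ = ρ * (β ⬝ᵥ c) := by
  classical
  obtain ⟨L, hL⟩ := hbdd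
  have hcF : SFeas β c c := ⟨hc, rfl⟩
  have hLc : L ≤ g ⬝ᵥ c := hL c hcF
  -- no feasible ray can have negative cost
  have ray : ∀ z : Fin n → ℝ, 0 ≤ z → β ⬝ᵥ z = 0 → 0 ≤ g ⬝ᵥ z := by
    intro z hz hbz
    by_contra h
    push_neg at h
    obtain ⟨t, ht0, hlt⟩ := no_lower L (g ⬝ᵥ c) (g ⬝ᵥ z) h
    have hfe : SFeas β c (c + t • z) := by
      refine ⟨fun i => ?_, ?_⟩
      · have h1 : (0:ℝ) ≤ z i := hz i
        have h2 : (0:ℝ) ≤ c i := hc i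
        simp only [Pi.add_apply, Pi.smul_apply, smul_eq_mul, Pi.zero_apply]
        nlinarith
      · rw [dotProduct_add, dotProduct_smul, hbz, smul_zero, add_zero]
    have := hL _ hfe
    rw [dotProduct_add, dotProduct_smul, smul_eq_mul] at this
    linarith
  have ray0 : ∀ i, β i = 0 → 0 ≤ g i := by
    intro i hβi
    have := ray (e i) (e_nonneg i) (by rw [dp_e, hβi])
    rwa [dp_e] at this
  by_cases hP : ∃ i, 0 < β i
  · obtain ⟨i₀, hi₀⟩ := hP
    have hPne : (Finset.univ.filter fun i => 0 < β i).Nonempty :=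
      ⟨i₀, Finset.mem_filter.mpr ⟨Finset.mem_univ _, hi₀⟩⟩
    obtain ⟨k, hk, hmin⟩ := Finset.exists_min_image _ (fun i => g i / β i) hPne
    have hβk : 0 < β k := (Finset.mem_filter.mp hk).2
    refine ⟨g k / β k, ?_, ?_⟩
    · intro i
      rcases lt_trichotomy (β i) 0 with h | h | h
      · -- negative coordinate: use a two-coordinate ray
        by_contra hcon
        push_neg at hcon
        set z : Fin n → ℝ := e i + (-(β i) / β k) • e k with hzdef
        have hco : 0 ≤ -(β i) / β k := div_nonneg (by linarith) hβk.le
        have hz0 : 0 ≤ z := by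
          intro j
          have h1 := e_nonneg i j
          have h2 := e_nonneg k j
          simp only [hzdef, Pi.add_apply, Pi.smul_apply, smul_eq_mul, Pi.zero_apply] at *
          nlinarith
        have hβz : β ⬝ᵥ z = 0 := by
          rw [hzdef, dotProduct_add, dp_e, dp_smul_e]
          field_simp
          ring
        have hgz : g ⬝ᵥ z = g i + -(β i) / β k * g k := by
          rw [hzdef, dotProduct_add, dp_e, dp_smul_e]
        have hr := ray z hz0 hβz
        rw [hgz] at hr
        have h3 : 0 ≤ (g i + -(β i) / β k * g k) * β k := mul_nonneg hr hβk.le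
        have h4 : (g i + -(β i) / β k * g k) * β k = g i * β k - β i * g k := by
          field_simp; ring
        rw [div_mul_eq_mul_div, lt_div_iff₀ hβk] at hcon
        nlinarith
      · rw [h, mul_zero]; exact ray0 i h
      · have hi : i ∈ Finset.univ.filter fun i => 0 < β i :=
          Finset.mem_filter.mpr ⟨Finset.mem_univ _, h⟩
        have := hmin i hi
        rw [div_le_div_iff₀ hβk h] at this
        calc g k / β k * β i = g k * β i / β k := by ring
          _ ≤ g i := by rw [div_le_iff₀ hβk]; linarith
    · refine ⟨(β ⬝ᵥ c / β k) • e k, ⟨?_, ?_⟩, ?_⟩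
      · intro j
        have hco : 0 ≤ β ⬝ᵥ c / β k := div_nonneg hb0 hβk.le
        have h2 := e_nonneg k j
        simp only [Pi.smul_apply, smul_eq_mul, Pi.zero_apply] at *
        nlinarith
      · rw [dp_smul_e, div_mul_cancel₀ _ (ne_of_gt hβk)]
      · rw [dp_smul_e]; ring
  · push_neg at hP
    have hb0' : β ⬝ᵥ c = 0 := by
      refine le_antisymm ?_ hb0
      exact Finset.sum_nonpos fun i _ => mul_nonpos_of_nonpos_of_nonneg (hP i) (hc i)
    have hy₀ : SFeas β c (0 : Fin n → ℝ) := ⟨le_rfl, by rw [dotProduct_zero, hb0']⟩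
    by_cases hN : ∃ i, β i < 0
    · obtain ⟨i₀, hi₀⟩ := hN
      have hNne : (Finset.univ.filter fun i => β i < 0).Nonempty :=
        ⟨i₀, Finset.mem_filter.mpr ⟨Finset.mem_univ _, hi₀⟩⟩
      obtain ⟨k, hk, hmax⟩ := Finset.exists_max_image _ (fun i => g i / β i) hNne
      have hβk : β k < 0 := (Finset.mem_filter.mp hk).2
      refine ⟨g k / β k, fun i => ?_, 0, hy₀, by rw [hb0', mul_zero, dotProduct_zero]⟩
      rcases lt_or_eq_of_le (hP i) with h | h
      · have hi : i ∈ Finset.univ.filter fun i => β i < 0 :=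
          Finset.mem_filter.mpr ⟨Finset.mem_univ _, h⟩
        have h1 := mul_le_mul_of_nonpos_right (hmax i hi) (le_of_lt h)
        rwa [div_mul_cancel₀ _ (ne_of_lt h)] at h1
      · rw [h, mul_zero]; exact ray0 i h
    · push_neg at hN
      have hβ0 : ∀ i, β i = 0 := fun i => le_antisymm (hP i) (hN i)
      exact ⟨0, fun i => by rw [zero_mul]; exact ray0 i (hβ0 i),
        0, hy₀, by rw [hb0', mul_zero, dotProduct_zero]⟩

lemma sfeas_neg (β c : Fin n → ℝ) (y : Fin n → ℝ) : SFeas (-β) c y ↔ SFeas β c y := by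
  unfold SFeas
  rw [neg_dotProduct, neg_dotProduct, neg_inj]

lemma sd (β c g : Fin n → ℝ) (hc : 0 ≤ c)
    (hbdd : ∃ L, ∀ y, SFeas β c y → L ≤ g ⬝ᵥ y) :
    ∃ ρ, (∀ i, ρ * β i ≤ g i) ∧ ∃ y₀, SFeas β c y₀ ∧ g ⬝ᵥ y₀ = ρ * (β ⬝ᵥ c) := by
  rcases le_or_gt 0 (β ⬝ᵥ c) with h | h
  · exact sd_pos β c g hc h hbdd
  · obtain ⟨L, hL⟩ := hbdd
    obtain ⟨ρ, hρ, y₀, hy₀, hval⟩ := sd_pos (-β) c g hc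
      (by rw [neg_dotProduct]; linarith)
      ⟨L, fun y hy => hL y ((sfeas_neg β c y).mp hy)⟩
    refine ⟨-ρ, fun i => ?_, y₀, (sfeas_neg β c y₀).mp hy₀, ?_⟩
    · have := hρ i
      simp only [Pi.neg_apply, mul_neg] at this
      linarith
    · rw [hval, neg_dotProduct]; ring

-- KEY, positive case
lemma key_pos (β Mv c : Fin n → ℝ) (hb : 0 < β ⬝ᵥ c) (E : Fin n → Prop)
    (y2 : Fin n → ℝ) (h0 : 0 ≤ y2) (hs : ∀ i, y2 i ≠ 0 → E i) (hf : β ⬝ᵥ y2 = β ⬝ᵥ c) :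
    (∃ z, 0 ≤ z ∧ (∀ i, z i ≠ 0 → E i) ∧ β ⬝ᵥ z = 0 ∧ 0 < Mv ⬝ᵥ z) ∨
    (∃ k, E k ∧ 0 < β k ∧ Mv ⬝ᵥ y2 ≤ Mv k * (β ⬝ᵥ c) / β k) := by
  classical
  have hex : ∃ i, 0 < β i * y2 i := by
    by_contra h
    push_neg at h
    have : β ⬝ᵥ y2 ≤ 0 := Finset.sum_nonpos fun i _ => h i
    linarith [hf ▸ this]
  obtain ⟨i₀, hi₀⟩ := hex
  have hy2i₀ : y2 i₀ ≠ 0 := by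
    intro h; rw [h, mul_zero] at hi₀; exact lt_irrefl 0 hi₀
  have hβi₀ : 0 < β i₀ := by
    rcases le_or_gt (β i₀) 0 with h | h
    · exact absurd hi₀ (not_lt.mpr (mul_nonpos_of_nonpos_of_nonneg h (h0 i₀)))
    · exact h
  have hPne : (Finset.univ.filter fun i => E i ∧ 0 < β i).Nonempty :=
    ⟨i₀, Finset.mem_filter.mpr ⟨Finset.mem_univ _, hs i₀ hy2i₀, hβi₀⟩⟩
  obtain ⟨k, hk, hmax⟩ := Finset.exists_max_image _ (fun i => Mv i / β i) hPne
  obtain ⟨hEk, hβk⟩ := (Finset.mem_filter.mp hk).2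
  by_cases hall : ∀ i, E i → Mv i ≤ Mv k / β k * β i
  · right
    refine ⟨k, hEk, hβk, ?_⟩
    have h1 : Mv ⬝ᵥ y2 ≤ Mv k / β k * (β ⬝ᵥ y2) := by
      rw [dotProduct, dotProduct, Finset.mul_sum]
      refine Finset.sum_le_sum fun i _ => ?_
      by_cases hz : y2 i = 0
      · simp [hz]
      · rw [← mul_assoc]
        exact mul_le_mul_of_nonneg_right (hall i (hs i hz)) (h0 i)
    rw [hf] at h1
    calc Mv ⬝ᵥ y2 ≤ Mv k / β k * (β ⬝ᵥ c) := h1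
      _ = Mv k * (β ⬝ᵥ c) / β k := by ring
  · left
    push_neg at hall
    obtain ⟨i, hEi, hlt⟩ := hall
    rcases lt_trichotomy (β i) 0 with h | h | h
    · refine ⟨e i + (-(β i) / β k) • e k, ?_, ?_, ?_, ?_⟩
      · intro j
        have hco : 0 ≤ -(β i) / β k := div_nonneg (by linarith) hβk.le
        have h1 := e_nonneg i j
        have h2 := e_nonneg k j
        simp only [Pi.add_apply, Pi.smul_apply, smul_eq_mul, Pi.zero_apply] at *
        nlinarith
      · intro j hj
        by_cases hji : j = i
        · rwa [hji]
        · by_cases hjk : j = k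
          · rwa [hjk]
          · exfalso
            apply hj
            simp [e, Pi.add_apply, Pi.smul_apply, hji, hjk]
      · rw [dotProduct_add, dp_e, dp_smul_e]; field_simp; ring
      · rw [dotProduct_add, dp_e, dp_smul_e]
        rw [div_mul_eq_mul_div] at hlt
        have hrr : Mv i + -(β i) / β k * Mv k = Mv i - Mv k * β i / β k := by ring
        rw [hrr, sub_pos]
        exact hlt
    · rw [div_mul_eq_mul_div, h, mul_zero, zero_div] at hlt
      refine ⟨e i, e_nonneg i, ?_, by rw [dp_e, h], by rw [dp_e]; linarith⟩
      intro j hj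
      by_cases hji : j = i
      · rwa [hji]
      · exfalso; apply hj; simp [e, hji]
    · exfalso
      have hi : i ∈ Finset.univ.filter fun i => E i ∧ 0 < β i :=
        Finset.mem_filter.mpr ⟨Finset.mem_univ _, hEi, h⟩
      have h1 := hmax i hi
      rw [div_le_div_iff₀ h hβk] at h1
      rw [div_mul_eq_mul_div, div_lt_iff₀ hβk] at hlt
      linarith

lemma key (β Mv c : Fin n → ℝ) (hb : β ⬝ᵥ c ≠ 0) (E : Fin n → Prop)
    (y2 : Fin n → ℝ) (h0 : 0 ≤ y2) (hs : ∀ i, y2 i ≠ 0 → E i) (hf : β ⬝ᵥ y2 = β ⬝ᵥ c) :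
    (∃ z, 0 ≤ z ∧ (∀ i, z i ≠ 0 → E i) ∧ β ⬝ᵥ z = 0 ∧ 0 < Mv ⬝ᵥ z) ∨
    (∃ k, E k ∧ 0 < β k * (β ⬝ᵥ c) ∧ Mv ⬝ᵥ y2 ≤ Mv k * (β ⬝ᵥ c) / β k) := by
  rcases lt_or_gt_of_ne hb with h | h
  · rcases key_pos (-β) Mv c (by rw [neg_dotProduct]; linarith) E y2 h0 hs
      (by rw [neg_dotProduct, neg_dotProduct, hf]) with ⟨z, h1, h2, h3, h4⟩ | ⟨k, h1, h2, h3⟩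
    · refine Or.inl ⟨z, h1, h2, ?_, h4⟩
      rw [neg_dotProduct] at h3; linarith
    · refine Or.inr ⟨k, h1, ?_, ?_⟩
      · have hk : (0:ℝ) < -(β k) := h2
        nlinarith
      · rw [neg_dotProduct] at h3
        have hk : (0:ℝ) < -(β k) := h2
        have : Mv k * -(β ⬝ᵥ c) / (-β) k = Mv k * (β ⬝ᵥ c) / β k := by
          simp only [Pi.neg_apply, mul_neg, neg_div_neg_eq]
        rwa [this] at h3
  · rcases key_pos β Mv c h E y2 h0 hs hf with h' | ⟨k, h1, h2, h3⟩
    · exact Or.inl h'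
    · exact Or.inr ⟨k, h1, mul_pos h2 h, h3⟩

lemma comp_supp {β g : Fin n → ℝ} {ρ : ℝ} (hρ : ∀ i, ρ * β i ≤ g i) {y : Fin n → ℝ}
    (hy0 : 0 ≤ y) (hval : g ⬝ᵥ y = ρ * (β ⬝ᵥ y)) : ∀ i, y i ≠ 0 → g i = ρ * β i := by
  have h : ∀ i ∈ Finset.univ, 0 ≤ (g i - ρ * β i) * y i :=
    fun i _ => mul_nonneg (by linarith [hρ i]) (hy0 i)
  have hsum : ∑ i, (g i - ρ * β i) * y i = 0 := by
    have h1 : ∑ i, (g i - ρ * β i) * y i = g ⬝ᵥ y - ρ * (β ⬝ᵥ y) := by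
      rw [dotProduct, dotProduct, Finset.mul_sum, ← Finset.sum_sub_distrib]
      exact Finset.sum_congr rfl fun i _ => by ring
    rw [h1, hval, sub_self]
  intro i hi
  have h2 := (Finset.sum_eq_zero_iff_of_nonneg h).mp hsum i (Finset.mem_univ i)
  rcases mul_eq_zero.mp h2 with h' | h'
  · linarith [h']
  · exact absurd h' hi

lemma ray_cost_zero {β g : Fin n → ℝ} {ρ : ℝ} {z : Fin n → ℝ}
    (hE : ∀ i, z i ≠ 0 → g i = ρ * β i) (hβz : β ⬝ᵥ z = 0) : g ⬝ᵥ z = 0 := by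
  have h1 : g ⬝ᵥ z = ρ * (β ⬝ᵥ z) := by
    rw [dotProduct, dotProduct, Finset.mul_sum]
    refine Finset.sum_congr rfl fun i _ => ?_
    by_cases hz : z i = 0
    · simp [hz]
    · rw [hE i hz, mul_assoc]
  rw [h1, hβz, mul_zero]

lemma zero_opt {β Mv c d : Fin n → ℝ} {v ρ : ℝ} (hρ : ∀ i, ρ * β i ≤ (d + v • Mv) i)
    (hb0 : β ⬝ᵥ c = 0) : SOpt β Mv c d v 0 := by
  refine ⟨⟨le_rfl, by rw [dotProduct_zero, hb0]⟩, fun y' hy' => ?_⟩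
  have h1 := wd hρ hy'.1
  rw [hy'.2, hb0, mul_zero] at h1
  rw [dotProduct_zero]
  exact h1

lemma vertex_opt {β Mv c d : Fin n → ℝ} {v ρ : ℝ} {k : Fin n}
    (hρ : ∀ i, ρ * β i ≤ (d + v • Mv) i) (hE : (d + v • Mv) k = ρ * β k)
    (hk : 0 < β k * (β ⬝ᵥ c)) :
    SOpt β Mv c d v ((β ⬝ᵥ c / β k) • e k) ∧
      Mv ⬝ᵥ ((β ⬝ᵥ c / β k) • e k) = Mv k * (β ⬝ᵥ c) / β k := by
  have hβk : β k ≠ 0 := by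
    intro h; rw [h, zero_mul] at hk; exact lt_irrefl 0 hk
  have hcoef : 0 < β ⬝ᵥ c / β k := by
    have h1 : β ⬝ᵥ c / β k = β k * (β ⬝ᵥ c) / (β k * β k) := by
      rw [mul_div_mul_left _ _ hβk]
    rw [h1]
    exact div_pos hk (mul_self_pos.mpr hβk)
  refine ⟨⟨⟨fun j => ?_, ?_⟩, fun y' hy' => ?_⟩, by rw [dp_smul_e]; ring⟩
  · have h2 := e_nonneg k j
    simp only [Pi.smul_apply, smul_eq_mul, Pi.zero_apply] at *
    nlinarith
  · rw [dp_smul_e, div_mul_cancel₀ _ hβk]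
  · have h1 := wd hρ hy'.1
    rw [hy'.2] at h1
    have h2 : (d + v • Mv) ⬝ᵥ ((β ⬝ᵥ c / β k) • e k) = ρ * (β ⬝ᵥ c) := by
      rw [dp_smul_e, hE]
      field_simp
    rw [h2]
    exact h1


-- ============ matrix-level lemmas ============

section MatrixLevel

variable {m : ℕ} (A : Matrix (Fin m) (Fin n) ℝ) (B : Matrix (Fin 1) (Fin n) ℝ)
  (Mv c d : Fin n → ℝ)

lemma feas_bridge (y : Fin n → ℝ) : (B *ᵥ y = B *ᵥ c) ↔ B 0 ⬝ᵥ y = B 0 ⬝ᵥ c := by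
  constructor
  · intro h; exact congrFun h 0
  · intro h; funext j; rw [Fin.eq_zero j]; exact h

lemma opt_bridge (v : ℝ) (y : Fin n → ℝ) :
    OptimalFor B c (d + v • Mv) y ↔ SOpt (B 0) Mv c d v y := by
  constructor
  · rintro ⟨h1, h2, h3⟩
    exact ⟨⟨h2, (feas_bridge B c y).mp h1⟩,
      fun y' hy' => h3 y' ((feas_bridge B c y').mpr hy'.2) hy'.1⟩
  · rintro ⟨⟨h1, h2⟩, h3⟩
    exact ⟨(feas_bridge B c y).mpr h2, h1,
      fun y' h4 h5 => h3 y' ⟨h5, (feas_bridge B c y').mp h4⟩⟩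

lemma psi_mem (v u : ℝ) :
    u ∈ PsiR B Mv c d v ↔ ∃ y, SOpt (B 0) Mv c d v y ∧ u = Mv ⬝ᵥ y - Mv ⬝ᵥ c := by
  unfold PsiR
  simp only [Set.mem_setOf_eq, opt_bridge, dotProduct_sub]

lemma bounded_of_mem (hA1 : Assumption1R A B Mv) (hA2 : Mv ⬝ᵥ Mv = 1)
    {v : ℝ} (hv : v ∈ ThetaPR A Mv d) :
    ∃ L, ∀ y, SFeas (B 0) c y → L ≤ (d + v • Mv) ⬝ᵥ y := by
  obtain ⟨x, hx0, hxA, hxM⟩ := hv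
  obtain ⟨hOrt, hAM, hBM, hSum⟩ := hA1
  have hmem : x - d ∈ LinearMap.range (Aᵀ).mulVecLin ⊔ LinearMap.range (Bᵀ).mulVecLin ⊔
      Submodule.span ℝ {Mv} := hSum ▸ Submodule.mem_top
  obtain ⟨q, hq, r, hr, hqr⟩ := Submodule.mem_sup.mp hmem
  obtain ⟨qa, hqa, qb, hqb, hq'⟩ := Submodule.mem_sup.mp hq
  obtain ⟨p, hp⟩ := hqa
  obtain ⟨s, hsq⟩ := hqb
  obtain ⟨t, ht⟩ := Submodule.mem_span_singleton.mp hr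
  rw [Matrix.mulVecLin_apply] at hp hsq
  -- each row of A is Aᵀ *ᵥ (e j)
  have hrow : ∀ (j : Fin m) (z : Fin n → ℝ), (A *ᵥ z) j = (Aᵀ *ᵥ e j) ⬝ᵥ z := by
    intro j z
    simp [Matrix.mulVec, dotProduct, e, Pi.single_apply, mul_ite, ite_mul,
      Finset.sum_ite_eq, Matrix.transpose_apply]
  have hAqb : A *ᵥ qb = 0 := by
    funext j
    rw [← hsq] at *
    rw [hrow j]
    exact hOrt (e j) s
  have hAMv : A *ᵥ Mv = 0 := by
    funext j
    rw [hrow j]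
    exact hAM (e j)
  have hAxd : A *ᵥ (x - d) = 0 := by rw [Matrix.mulVec_sub, hxA, sub_self]
  have hAr : A *ᵥ r = 0 := by
    rw [← ht, Matrix.mulVec_smul, hAMv, smul_zero]
  have hAqa : A *ᵥ qa = 0 := by
    have h1 : qa = (x - d) - qb - r := by
      rw [← hqr, ← hq']; abel
    rw [h1, Matrix.mulVec_sub, Matrix.mulVec_sub, hAxd, hAqb, hAr]
    simp
  have hqa0 : qa = 0 := by
    have h2 : qa ⬝ᵥ qa = 0 := by
      calc qa ⬝ᵥ qa = (Aᵀ *ᵥ p) ⬝ᵥ qa := by rw [hp]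
        _ = (p ᵥ* A) ⬝ᵥ qa := by rw [Matrix.mulVec_transpose]
        _ = p ⬝ᵥ (A *ᵥ qa) := (Matrix.dotProduct_mulVec _ _ _).symm
        _ = 0 := by rw [hAqa, dotProduct_zero]
    exact dotProduct_self_eq_zero.mp h2
  have hdecomp : x - d = s 0 • B 0 + t • Mv := by
    rw [← hqr, ← hq', hqa0, ← ht, zero_add]
    congr 1
    rw [← hsq]
    funext i
    simp [Matrix.mulVec, dotProduct, Fin.sum_univ_one, Matrix.transpose_apply, mul_comm]
  have hBMv : B 0 ⬝ᵥ Mv = 0 := by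
    have h0 : Bᵀ *ᵥ e 0 = B 0 := by
      funext i
      simp [Matrix.mulVec, dotProduct, e, Fin.sum_univ_one, Matrix.transpose_apply]
    have := hBM (e 0)
    rwa [h0] at this
  have hteq : t = v := by
    have h1 : Mv ⬝ᵥ (x - d) = v := by rw [dotProduct_sub, hxM]; ring
    have h2 : Mv ⬝ᵥ (x - d) = s 0 * (Mv ⬝ᵥ B 0) + t * (Mv ⬝ᵥ Mv) := by
      rw [hdecomp, dotProduct_add, dotProduct_smul, dotProduct_smul, smul_eq_mul, smul_eq_mul]
    rw [h1, hA2, dotProduct_comm Mv (B 0), hBMv] at h2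
    linarith
  have hcost : d + v • Mv = x - s 0 • B 0 := by
    have h1 : x - d = s 0 • B 0 + v • Mv := hteq ▸ hdecomp
    funext i
    have := congrFun h1 i
    simp only [Pi.sub_apply, Pi.add_apply, Pi.smul_apply, smul_eq_mul] at this ⊢
    linarith
  refine ⟨-(s 0 * (B 0 ⬝ᵥ c)), fun y hy => ?_⟩
  have h3 : (d + v • Mv) ⬝ᵥ y = x ⬝ᵥ y - s 0 * (B 0 ⬝ᵥ y) := by
    rw [hcost, sub_dotProduct, smul_dotProduct, smul_eq_mul]
  have h4 : 0 ≤ x ⬝ᵥ y := Finset.sum_nonneg fun i _ => mul_nonneg (hx0 i) (hy.1 i)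
  rw [h3, hy.2]
  linarith

lemma att (hA1 : Assumption1R A B Mv) (hA2 : Mv ⬝ᵥ Mv = 1) (hc : 0 ≤ c)
    {v : ℝ} (hv : v ∈ ThetaPR A Mv d) :
    ∃ ρ y₀, (∀ i, ρ * B 0 i ≤ (d + v • Mv) i) ∧ SOpt (B 0) Mv c d v y₀ ∧
      (d + v • Mv) ⬝ᵥ y₀ = ρ * (B 0 ⬝ᵥ c) := by
  obtain ⟨ρ, hρ, y₀, hy₀, hval⟩ :=
    sd (B 0) c (d + v • Mv) hc (bounded_of_mem A B Mv c d hA1 hA2 hv)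
  refine ⟨ρ, y₀, hρ, ⟨hy₀, fun y' hy' => ?_⟩, hval⟩
  rw [hval, ← hy'.2]
  exact wd hρ hy'.1

lemma theta_convex {v1 v2 w : ℝ} (h1 : v1 ∈ ThetaPR A Mv d) (h2 : v2 ∈ ThetaPR A Mv d)
    (hw1 : v1 ≤ w) (hw2 : w ≤ v2) : w ∈ ThetaPR A Mv d := by
  obtain ⟨x1, hx10, hx1A, hx1M⟩ := h1
  obtain ⟨x2, hx20, hx2A, hx2M⟩ := h2
  rcases eq_or_lt_of_le (hw1.trans hw2) with heq | hlt
  · have hwv : w = v1 := le_antisymm (heq ▸ hw2) hw1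
    exact hwv ▸ ⟨x1, hx10, hx1A, hx1M⟩
  · set θ := (w - v1) / (v2 - v1) with hθ
    have hd21 : (0:ℝ) < v2 - v1 := by linarith
    have hθ0 : 0 ≤ θ := div_nonneg (by linarith) hd21.le
    have hθ1 : θ ≤ 1 := by
      rw [hθ, div_le_one hd21]; linarith
    refine ⟨(1 - θ) • x1 + θ • x2, fun i => ?_, ?_, ?_⟩
    · have := hx10 i; have := hx20 i
      simp only [Pi.add_apply, Pi.smul_apply, smul_eq_mul, Pi.zero_apply] at *
      nlinarith
    · rw [Matrix.mulVec_add, Matrix.mulVec_smul, Matrix.mulVec_smul, hx1A, hx2A,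
        ← add_smul]
      simp
    · rw [dotProduct_add, dotProduct_smul, dotProduct_smul, hx1M, hx2M,
        smul_eq_mul, smul_eq_mul]
      have hθv : θ * (v2 - v1) = w - v1 := by
        rw [hθ, div_mul_cancel₀ _ (ne_of_gt hd21)]
      nlinarith

lemma unb_up (hA1 : Assumption1R A B Mv) (hA2 : Mv ⬝ᵥ Mv = 1) (hc : 0 ≤ c)
    {v : ℝ} {z : Fin n → ℝ} (hz0 : 0 ≤ z) (hβz : B 0 ⬝ᵥ z = 0)
    (hgz : (d + v • Mv) ⬝ᵥ z = 0) (hMz : 0 < Mv ⬝ᵥ z) :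
    ∀ v' < v, v' ∉ ThetaPR A Mv d := by
  intro v' hv' hmemv
  obtain ⟨L, hL⟩ := bounded_of_mem A B Mv c d hA1 hA2 hmemv
  have hslope : (d + v' • Mv) ⬝ᵥ z = (v' - v) * (Mv ⬝ᵥ z) := by
    have h1 : (d + v' • Mv) ⬝ᵥ z = (d + v • Mv) ⬝ᵥ z + (v' - v) * (Mv ⬝ᵥ z) := by
      rw [dp_add_smul, dp_add_smul]; ring
    rw [h1, hgz, zero_add]
  have hneg : (d + v' • Mv) ⬝ᵥ z < 0 := by
    rw [hslope]; nlinarith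
  obtain ⟨t, ht0, hlt⟩ := no_lower L ((d + v' • Mv) ⬝ᵥ c) ((d + v' • Mv) ⬝ᵥ z) hneg
  have hfe : SFeas (B 0) c (c + t • z) := by
    refine ⟨fun i => ?_, ?_⟩
    · have h1 : (0:ℝ) ≤ z i := hz0 i
      have h2 : (0:ℝ) ≤ c i := hc i
      simp only [Pi.add_apply, Pi.smul_apply, smul_eq_mul, Pi.zero_apply]
      nlinarith
    · rw [dotProduct_add, dotProduct_smul, hβz, smul_zero, add_zero]
  have := hL _ hfe
  rw [dotProduct_add, dotProduct_smul, smul_eq_mul] at this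
  linarith

lemma unb_down (hA1 : Assumption1R A B Mv) (hA2 : Mv ⬝ᵥ Mv = 1) (hc : 0 ≤ c)
    {v : ℝ} {z : Fin n → ℝ} (hz0 : 0 ≤ z) (hβz : B 0 ⬝ᵥ z = 0)
    (hgz : (d + v • Mv) ⬝ᵥ z = 0) (hMz : Mv ⬝ᵥ z < 0) :
    ∀ v', v < v' → v' ∉ ThetaPR A Mv d := by
  intro v' hv' hmemv
  obtain ⟨L, hL⟩ := bounded_of_mem A B Mv c d hA1 hA2 hmemv
  have hslope : (d + v' • Mv) ⬝ᵥ z = (v' - v) * (Mv ⬝ᵥ z) := by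
    have h1 : (d + v' • Mv) ⬝ᵥ z = (d + v • Mv) ⬝ᵥ z + (v' - v) * (Mv ⬝ᵥ z) := by
      rw [dp_add_smul, dp_add_smul]; ring
    rw [h1, hgz, zero_add]
  have hneg : (d + v' • Mv) ⬝ᵥ z < 0 := by
    rw [hslope]; nlinarith
  obtain ⟨t, ht0, hlt⟩ := no_lower L ((d + v' • Mv) ⬝ᵥ c) ((d + v' • Mv) ⬝ᵥ z) hneg
  have hfe : SFeas (B 0) c (c + t • z) := by
    refine ⟨fun i => ?_, ?_⟩
    · have h1 : (0:ℝ) ≤ z i := hz0 i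
      have h2 : (0:ℝ) ≤ c i := hc i
      simp only [Pi.add_apply, Pi.smul_apply, smul_eq_mul, Pi.zero_apply]
      nlinarith
    · rw [dotProduct_add, dotProduct_smul, hβz, smul_zero, add_zero]
  have := hL _ hfe
  rw [dotProduct_add, dotProduct_smul, smul_eq_mul] at this
  linarith

end MatrixLevel

-- ============ transition point counting ============

section Transition

variable {m : ℕ} (A : Matrix (Fin m) (Fin n) ℝ) (B : Matrix (Fin 1) (Fin n) ℝ)
  (Mv c d : Fin n → ℝ)

def UpRay (β Mv c d : Fin n → ℝ) (v : ℝ) : Prop :=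
  ∃ z, 0 ≤ z ∧ β ⬝ᵥ z = 0 ∧ (d + v • Mv) ⬝ᵥ z = 0 ∧ 0 < Mv ⬝ᵥ z

def DownRay (β Mv c d : Fin n → ℝ) (v : ℝ) : Prop :=
  ∃ z, 0 ≤ z ∧ β ⬝ᵥ z = 0 ∧ (d + v • Mv) ⬝ᵥ z = 0 ∧ Mv ⬝ᵥ z < 0

def TCharge (β Mv c d : Fin n → ℝ) (v : ℝ) (i : Fin n) : Prop :=
  (0 < β i * (β ⬝ᵥ c) ∧ (∃ y, SOpt β Mv c d v y ∧ Mv ⬝ᵥ y = Mv i * (β ⬝ᵥ c) / β i) ∧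
      (∃ y, SOpt β Mv c d v y ∧ Mv ⬝ᵥ y < Mv i * (β ⬝ᵥ c) / β i)) ∨
  (β i * (β ⬝ᵥ c) ≤ 0 ∧ UpRay β Mv c d v ∧ (β ⬝ᵥ c ≠ 0 ∨ 0 < Mv i)) ∨
  (β i * (β ⬝ᵥ c) ≤ 0 ∧ DownRay β Mv c d v ∧ (β ⬝ᵥ c = 0 ∧ Mv i < 0))

lemma two_opt (hA1 : Assumption1R A B Mv) (hA2 : Mv ⬝ᵥ Mv = 1) (hc : 0 ≤ c)
    {v : ℝ} (hv : IsTransitionPoint A B Mv c d v) :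
    ∃ y1 y2, SOpt (B 0) Mv c d v y1 ∧ SOpt (B 0) Mv c d v y2 ∧ Mv ⬝ᵥ y1 < Mv ⬝ᵥ y2 := by
  obtain ⟨hvΘ, hns⟩ := hv
  obtain ⟨ρ, y₀, hρ, hopt₀, hval₀⟩ := att A B Mv c d hA1 hA2 hc hvΘ
  by_contra h
  push_neg at h
  apply hns
  refine ⟨Mv ⬝ᵥ y₀ - Mv ⬝ᵥ c, Set.eq_singleton_iff_unique_mem.mpr
    ⟨(psi_mem B Mv c d v _).mpr ⟨y₀, hopt₀, rfl⟩, ?_⟩⟩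
  intro u hu
  obtain ⟨y, hy, hyu⟩ := (psi_mem B Mv c d v u).mp hu
  have h1 := h y y₀ hy hopt₀
  have h2 := h y₀ y hopt₀ hy
  have h3 : Mv ⬝ᵥ y = Mv ⬝ᵥ y₀ := le_antisymm (not_lt.mp (fun hl => absurd hl (by
    intro hl'; exact absurd hl' (not_lt.mpr h2)))) (not_lt.mp (fun hl => absurd hl
    (not_lt.mpr h1)))
  rw [hyu, h3]

lemma tex (hA1 : Assumption1R A B Mv) (hA2 : Mv ⬝ᵥ Mv = 1) (hc : 0 ≤ c)
    {v : ℝ} (hv : IsTransitionPoint A B Mv c d v) :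
    ∃ i, TCharge (B 0) Mv c d v i := by
  obtain ⟨y1, y2, hy1, hy2, hlt⟩ := two_opt A B Mv c d hA1 hA2 hc hv
  obtain ⟨ρ, y₀, hρ, hopt₀, hval₀⟩ := att A B Mv c d hA1 hA2 hc hv.1
  by_cases hb0 : B 0 ⬝ᵥ c = 0
  · -- cone case
    have h0opt : SOpt (B 0) Mv c d v 0 := zero_opt hρ hb0
    rcases lt_or_ge 0 (Mv ⬝ᵥ y2) with hpos | hle
    · -- y2 itself is an up ray
      have hcz : (d + v • Mv) ⬝ᵥ y2 = 0 := by
        have := opt_cost_eq hy2 h0opt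
        rwa [dotProduct_zero] at this
      have hup : UpRay (B 0) Mv c d v := ⟨y2, hy2.1.1, by rw [hy2.1.2, hb0], hcz, hpos⟩
      have hex : ∃ i, 0 < Mv i * y2 i := by
        by_contra hcon
        push_neg at hcon
        have : Mv ⬝ᵥ y2 ≤ 0 := Finset.sum_nonpos fun i _ => hcon i
        linarith
      obtain ⟨i, hi⟩ := hex
      have hMvi : 0 < Mv i := by
        rcases le_or_gt (Mv i) 0 with h | h
        · exact absurd hi (not_lt.mpr (mul_nonpos_of_nonpos_of_nonneg h (hy2.1.1 i)))
        · exact h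
      exact ⟨i, Or.inr (Or.inl ⟨by rw [hb0, mul_zero], hup, Or.inr hMvi⟩)⟩
    · have hneg : Mv ⬝ᵥ y1 < 0 := lt_of_lt_of_le hlt hle
      have hcz : (d + v • Mv) ⬝ᵥ y1 = 0 := by
        have := opt_cost_eq hy1 h0opt
        rwa [dotProduct_zero] at this
      have hdn : DownRay (B 0) Mv c d v := ⟨y1, hy1.1.1, by rw [hy1.1.2, hb0], hcz, hneg⟩
      have hex : ∃ i, Mv i * y1 i < 0 := by
        by_contra hcon
        push_neg at hcon
        have : 0 ≤ Mv ⬝ᵥ y1 := Finset.sum_nonneg fun i _ => hcon i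
        linarith
      obtain ⟨i, hi⟩ := hex
      have hMvi : Mv i < 0 := by
        rcases le_or_gt 0 (Mv i) with h | h
        · exact absurd hi (not_lt.mpr (mul_nonneg h (hy1.1.1 i)))
        · exact h
      exact ⟨i, Or.inr (Or.inr ⟨by rw [hb0, mul_zero], hdn, hb0, hMvi⟩)⟩
  · -- b0 ≠ 0
    have hsupp2 : ∀ i, y2 i ≠ 0 → (d + v • Mv) i = ρ * B 0 i := by
      apply comp_supp hρ hy2.1.1
      have h1 : (d + v • Mv) ⬝ᵥ y2 = (d + v • Mv) ⬝ᵥ y₀ := opt_cost_eq hy2 hopt₀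
      rw [h1, hval₀, ← hy2.1.2]
    rcases key (B 0) Mv c hb0 (fun i => (d + v • Mv) i = ρ * B 0 i) y2 hy2.1.1 hsupp2
        hy2.1.2 with ⟨z, h1, h2, h3, h4⟩ | ⟨k, hEk, hkpos, hkey⟩
    · -- up ray from the optimal face
      have hcz : (d + v • Mv) ⬝ᵥ z = 0 := ray_cost_zero h2 h3
      have hup : UpRay (B 0) Mv c d v := ⟨z, h1, h3, hcz, h4⟩
      have hex : ∃ i, z i ≠ 0 ∧ B 0 i * (B 0 ⬝ᵥ c) ≤ 0 := by
        by_contra hcon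
        push_neg at hcon
        have hzne : ∃ i₀, z i₀ ≠ 0 := by
          by_contra hz
          push_neg at hz
          have : z = 0 := funext hz
          rw [this, dotProduct_zero] at h4
          exact lt_irrefl 0 h4
        obtain ⟨i₀, hi₀⟩ := hzne
        have hpos : 0 < (B 0 ⬝ᵥ z) * (B 0 ⬝ᵥ c) := by
          rw [dotProduct, Finset.sum_mul]
          refine Finset.sum_pos' (fun i _ => ?_) ⟨i₀, Finset.mem_univ i₀, ?_⟩
          · by_cases hz : z i = 0
            · rw [hz, mul_zero, zero_mul]
            · have := hcon i hz
              have hzi : 0 < z i := lt_of_le_of_ne (h1 i) (Ne.symm hz)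
              nlinarith
          · have := hcon i₀ hi₀
            have hzi : 0 < z i₀ := lt_of_le_of_ne (h1 i₀) (Ne.symm hi₀)
            nlinarith
        rw [h3, zero_mul] at hpos
        exact lt_irrefl 0 hpos
      obtain ⟨i, _, hβi⟩ := hex
      exact ⟨i, Or.inr (Or.inl ⟨hβi, hup, Or.inl hb0⟩)⟩
    · -- vertex charge
      have hver := vertex_opt hρ hEk hkpos
      exact ⟨k, Or.inl ⟨hkpos, ⟨_, hver.1, hver.2⟩,
        ⟨y1, hy1, lt_of_lt_of_le hlt hkey⟩⟩⟩

lemma tinj_lt (hA1 : Assumption1R A B Mv) (hA2 : Mv ⬝ᵥ Mv = 1) (hc : 0 ≤ c)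
    {v v' : ℝ} {i : Fin n} (hv : IsTransitionPoint A B Mv c d v)
    (hv' : IsTransitionPoint A B Mv c d v')
    (h1 : TCharge (B 0) Mv c d v i) (h2 : TCharge (B 0) Mv c d v' i)
    (hlt : v < v') : False := by
  rcases h1 with ⟨hp1, ⟨ya, hya, hvya⟩, ⟨yb, hyb, hvyb⟩⟩ | ⟨hs1, hup1, hor1⟩ | ⟨hs1, hdn1, hb1, hm1⟩
  · rcases h2 with ⟨hp2, ⟨ya', hya', hvya'⟩, _⟩ | ⟨hs2, _, _⟩ | ⟨hs2, _, _⟩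
    · have := ord hyb hya' hlt
      rw [hvya'] at this
      linarith
    · linarith
    · linarith
  · rcases h2 with ⟨hp2, _, _⟩ | ⟨hs2, hup2, hor2⟩ | ⟨hs2, hdn2, hb2, hm2⟩
    · linarith
    · obtain ⟨z, hz0, hβz, hgz, hMz⟩ := hup2
      exact unb_up A B Mv c d hA1 hA2 hc hz0 hβz hgz hMz v hlt hv.1
    · rcases hor1 with hne | hm1'
      · exact hne hb2
      · linarith
  · rcases h2 with ⟨hp2, _, _⟩ | ⟨hs2, hup2, hor2⟩ | ⟨hs2, hdn2, hb2, hm2⟩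
    · linarith
    · rcases hor2 with hne | hm2'
      · exact hne hb1
      · linarith
    · obtain ⟨z, hz0, hβz, hgz, hMz⟩ := hdn1
      exact unb_down A B Mv c d hA1 hA2 hc hz0 hβz hgz hMz v' hlt hv'.1

lemma tinj (hA1 : Assumption1R A B Mv) (hA2 : Mv ⬝ᵥ Mv = 1) (hc : 0 ≤ c)
    {v v' : ℝ} {i : Fin n} (hv : IsTransitionPoint A B Mv c d v)
    (hv' : IsTransitionPoint A B Mv c d v')
    (h1 : TCharge (B 0) Mv c d v i) (h2 : TCharge (B 0) Mv c d v' i) : v = v' := by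
  rcases lt_trichotomy v v' with h | h | h
  · exact absurd (tinj_lt A B Mv c d hA1 hA2 hc hv hv' h1 h2 h) not_false
  · exact h
  · exact absurd (tinj_lt A B Mv c d hA1 hA2 hc hv' hv h2 h1 h) not_false

end Transition

-- ============ generic counting ============

lemma count_le {α : Type*} {N : ℕ} (S : Set α) (P : α → Fin N → Prop)
    (hex : ∀ x ∈ S, ∃ i, P x i)
    (hinj : ∀ x ∈ S, ∀ y ∈ S, ∀ i, P x i → P y i → x = y)
    (hN : 0 < N) : S.Finite ∧ S.ncard ≤ N := by
  classical
  haveI : Nonempty (Fin N) := ⟨⟨0, hN⟩⟩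
  set f : α → Fin N := fun x => if h : ∃ i, P x i then h.choose else Classical.arbitrary _
    with hf
  have hP : ∀ x ∈ S, P x (f x) := by
    intro x hx
    have h := hex x hx
    rw [hf]
    simp only [dif_pos h]
    exact h.choose_spec
  have hfi : Set.InjOn f S := fun x hx y hy hxy =>
    hinj x hx y hy (f x) (hP x hx) (hxy ▸ hP y hy)
  constructor
  · exact Set.Finite.of_finite_image (Set.toFinite _) hfi
  · calc S.ncard = (f '' S).ncard := (Set.ncard_image_of_injOn hfi).symm
      _ ≤ (Set.univ : Set (Fin N)).ncard :=
        Set.ncard_le_ncard (Set.subset_univ _) (Set.toFinite _)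
      _ = N := by rw [Set.ncard_univ, Nat.card_eq_fintype_card, Fintype.card_fin]

-- ============ invariancy intervals ============

section Invariancy

variable {m : ℕ} (A : Matrix (Fin m) (Fin n) ℝ) (B : Matrix (Fin 1) (Fin n) ℝ)
  (Mv c d : Fin n → ℝ)

lemma inv_const (hA1 : Assumption1R A B Mv) (hA2 : Mv ⬝ᵥ Mv = 1) (hc : 0 ≤ c)
    {a b : ℝ} (hI : IsInvariancyInterval A B Mv c d a b) :
    ∃ u0, ∀ v ∈ Set.Ioo a b, PsiR B Mv c d v = {u0} := by
  obtain ⟨⟨hab, hsub, hconst⟩, hmax⟩ := hI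
  have hv0 : (a + b) / 2 ∈ Set.Ioo a b := ⟨by linarith, by linarith⟩
  have hv1 : (3 * a + b) / 4 ∈ Set.Ioo a b := ⟨by linarith, by linarith⟩
  have hv1v0 : (3 * a + b) / 4 < (a + b) / 2 := by linarith
  obtain ⟨ρ, y₀, hρ, hopt₀, _⟩ := att A B Mv c d hA1 hA2 hc (hsub hv0)
  refine ⟨Mv ⬝ᵥ y₀ - Mv ⬝ᵥ c, ?_⟩
  have hmem0 : (Mv ⬝ᵥ y₀ - Mv ⬝ᵥ c) ∈ PsiR B Mv c d ((a + b) / 2) :=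
    (psi_mem B Mv c d _ _).mpr ⟨y₀, hopt₀, rfl⟩
  have hsing : PsiR B Mv c d ((a + b) / 2) = {Mv ⬝ᵥ y₀ - Mv ⬝ᵥ c} := by
    refine Set.eq_singleton_iff_unique_mem.mpr ⟨hmem0, ?_⟩
    intro u hu
    obtain ⟨y', hy', hval'⟩ := (psi_mem B Mv c d _ _).mp hu
    have hu1 : u ∈ PsiR B Mv c d ((3 * a + b) / 4) := by
      rw [hconst _ hv1 _ hv0]; exact hu
    obtain ⟨y1', hy1', hval1'⟩ := (psi_mem B Mv c d _ _).mp hu1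
    have hu0 : (Mv ⬝ᵥ y₀ - Mv ⬝ᵥ c) ∈ PsiR B Mv c d ((3 * a + b) / 4) := by
      rw [hconst _ hv1 _ hv0]; exact hmem0
    obtain ⟨y1, hy1, hval1⟩ := (psi_mem B Mv c d _ _).mp hu0
    have o1 := ord hy1 hy' hv1v0
    have o2 := ord hy1' hopt₀ hv1v0
    linarith
  intro v hv
  rw [hconst _ hv _ hv0, hsing]

lemma ioo_cover {a b a' b' v w : ℝ} (hv : v ∈ Set.Ioo a b) (hv' : v ∈ Set.Ioo a' b')
    (hw : w ∈ Set.Ioo (min a a') (max b b')) :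
    w ∈ Set.Ioo a b ∨ w ∈ Set.Ioo a' b' := by
  obtain ⟨hw1, hw2⟩ := hw
  rw [min_lt_iff] at hw1
  rw [lt_max_iff] at hw2
  obtain ⟨hv1, hv2⟩ := hv
  obtain ⟨hv1', hv2'⟩ := hv'
  rcases lt_or_ge w b with h | h
  · rcases lt_or_ge a w with h2 | h2
    · exact Or.inl ⟨h2, h⟩
    · rcases hw1 with h3 | h3
      · linarith
      · exact Or.inr ⟨h3, by linarith⟩
  · rcases hw2 with h3 | h3
    · linarith
    · exact Or.inr ⟨by linarith, h3⟩

lemma inv_disjoint {a b a' b' v : ℝ} (h : IsInvariancyInterval A B Mv c d a b)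
    (h' : IsInvariancyInterval A B Mv c d a' b') (hv : v ∈ Set.Ioo a b)
    (hv' : v ∈ Set.Ioo a' b') : a = a' ∧ b = b' := by
  have hpsi : ∀ w ∈ Set.Ioo (min a a') (max b b'),
      PsiR B Mv c d w = PsiR B Mv c d v := by
    intro w hw
    rcases ioo_cover hv hv' hw with h1 | h1
    · exact h.1.2.2 _ h1 _ hv
    · exact h'.1.2.2 _ h1 _ hv'
  have hprop : min a a' < max b b' ∧ Set.Ioo (min a a') (max b b') ⊆ ThetaPR A Mv d ∧
      ∀ v1 ∈ Set.Ioo (min a a') (max b b'), ∀ v2 ∈ Set.Ioo (min a a') (max b b'),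
        PsiR B Mv c d v1 = PsiR B Mv c d v2 := by
    refine ⟨?_, ?_, ?_⟩
    · calc min a a' ≤ a := min_le_left _ _
        _ < b := h.1.1
        _ ≤ max b b' := le_max_left _ _
    · intro w hw
      rcases ioo_cover hv hv' hw with h1 | h1
      · exact h.1.2.1 h1
      · exact h'.1.2.1 h1
    · intro v1 h1 v2 h2
      rw [hpsi v1 h1, hpsi v2 h2]
  have r1 := h.2 _ _ (min_le_left _ _) (le_max_left _ _) hprop
  have r2 := h'.2 _ _ (min_le_right _ _) (le_max_right _ _) hprop
  exact ⟨r1.1.symm.trans r2.1, r1.2.symm.trans r2.2⟩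

lemma inv_merge (hA1 : Assumption1R A B Mv) (hA2 : Mv ⬝ᵥ Mv = 1) (hc : 0 ≤ c)
    {a b a' b' u0 : ℝ}
    (h : IsInvariancyInterval A B Mv c d a b) (h' : IsInvariancyInterval A B Mv c d a' b')
    (hord : b ≤ a')
    (hu : ∀ v ∈ Set.Ioo a b, PsiR B Mv c d v = {u0})
    (hu' : ∀ v ∈ Set.Ioo a' b', PsiR B Mv c d v = {u0}) : False := by
  obtain ⟨⟨hab, hsub, hconst⟩, hmax⟩ := h
  obtain ⟨⟨hab', hsub', hconst'⟩, hmax'⟩ := h'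
  have hv1 : (a + b) / 2 ∈ Set.Ioo a b := ⟨by linarith, by linarith⟩
  have hv2 : (a' + b') / 2 ∈ Set.Ioo a' b' := ⟨by linarith, by linarith⟩
  have hv1Θ := hsub hv1
  have hv2Θ := hsub' hv2
  have hmem1 : u0 ∈ PsiR B Mv c d ((a + b) / 2) := by
    rw [hu _ hv1]; exact Set.mem_singleton _
  obtain ⟨y1, hy1, hval1⟩ := (psi_mem B Mv c d _ _).mp hmem1
  have hmem2 : u0 ∈ PsiR B Mv c d ((a' + b') / 2) := by
    rw [hu' _ hv2]; exact Set.mem_singleton _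
  obtain ⟨y2, hy2, hval2⟩ := (psi_mem B Mv c d _ _).mp hmem2
  have hmid : ∀ w ∈ Set.Ioo a b', PsiR B Mv c d w = {u0} := by
    intro w hw
    rcases lt_or_ge w b with h1 | h1
    · exact hu w ⟨hw.1, h1⟩
    · rcases lt_or_ge a' w with h2 | h2
      · exact hu' w ⟨h2, hw.2⟩
      · have hwΘ : w ∈ ThetaPR A Mv d :=
          theta_convex A Mv d hv1Θ hv2Θ (by linarith [hv1.2]) (by linarith [hv2.1])
        obtain ⟨ρ, y₀, hρ, hopt₀, _⟩ := att A B Mv c d hA1 hA2 hc hwΘ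
        have hkey : ∀ y, SOpt (B 0) Mv c d w y → Mv ⬝ᵥ y = u0 + Mv ⬝ᵥ c := by
          intro y hy
          have o1 := ord hy1 hy (show (a + b) / 2 < w by linarith [hv1.2])
          have o2 := ord hy hy2 (show w < (a' + b') / 2 by linarith [hv2.1])
          linarith
        refine Set.eq_singleton_iff_unique_mem.mpr ⟨?_, ?_⟩
        · exact (psi_mem B Mv c d _ _).mpr ⟨y₀, hopt₀, by linarith [hkey y₀ hopt₀]⟩
        · intro u hu''
          obtain ⟨y, hy, hvaly⟩ := (psi_mem B Mv c d _ _).mp hu''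
          have := hkey y hy
          rw [hvaly]; linarith
  have hprop : a < b' ∧ Set.Ioo a b' ⊆ ThetaPR A Mv d ∧
      ∀ w1 ∈ Set.Ioo a b', ∀ w2 ∈ Set.Ioo a b', PsiR B Mv c d w1 = PsiR B Mv c d w2 := by
    refine ⟨by linarith, ?_, ?_⟩
    · intro w hw
      rcases lt_or_ge w b with h1 | h1
      · exact hsub ⟨hw.1, h1⟩
      · rcases lt_or_ge a' w with h2 | h2
        · exact hsub' ⟨h2, hw.2⟩
        · exact theta_convex A Mv d hv1Θ hv2Θ (by linarith [hv1.2]) (by linarith [hv2.1])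
    · intro w1 h1 w2 h2
      rw [hmid w1 h1, hmid w2 h2]
  have := hmax a b' le_rfl (by linarith) hprop
  linarith [this.2]

lemma inv_value_ne (hA1 : Assumption1R A B Mv) (hA2 : Mv ⬝ᵥ Mv = 1) (hc : 0 ≤ c)
    {a b a' b' u0 u0' : ℝ}
    (h : IsInvariancyInterval A B Mv c d a b) (h' : IsInvariancyInterval A B Mv c d a' b')
    (hu : ∀ v ∈ Set.Ioo a b, PsiR B Mv c d v = {u0})
    (hu' : ∀ v ∈ Set.Ioo a' b', PsiR B Mv c d v = {u0'})
    (hne : ¬(a = a' ∧ b = b')) : u0 ≠ u0' := by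
  intro hequ
  subst hequ
  rcases le_or_gt b a' with hord | hord1
  · exact inv_merge A B Mv c d hA1 hA2 hc h h' hord hu hu'
  · rcases le_or_gt b' a with hord | hord2
    · exact inv_merge A B Mv c d hA1 hA2 hc h' h hord hu' hu
    · have hmax_lt : max a a' < min b b' := by
        simp only [max_lt_iff, lt_min_iff]
        exact ⟨⟨h.1.1, hord1⟩, hord2, h'.1.1⟩
      have hv : (max a a' + min b b') / 2 ∈ Set.Ioo a b := by
        constructor
        · have := le_max_left a a'; have := min_le_left b b'; linarith
        · have := le_max_left a a'; have := min_le_left b b'; linarith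
      have hv' : (max a a' + min b b') / 2 ∈ Set.Ioo a' b' := by
        constructor
        · have := le_max_right a a'; have := min_le_right b b'; linarith
        · have := le_max_right a a'; have := min_le_right b b'; linarith
      exact hne (inv_disjoint A B Mv c d h h' hv hv')

def ICharge (B : Matrix (Fin 1) (Fin n) ℝ) (Mv c d : Fin n → ℝ) (p : ℝ × ℝ) (i : Fin n) :
    Prop :=
  ∃ u0, (∀ v ∈ Set.Ioo p.1 p.2, PsiR B Mv c d v = {u0}) ∧
    ((0 < B 0 i * (B 0 ⬝ᵥ c) ∧ Mv i * (B 0 ⬝ᵥ c) / B 0 i = u0 + Mv ⬝ᵥ c) ∨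
      (B 0 ⬝ᵥ c = 0 ∧ u0 = -(Mv ⬝ᵥ c)))

lemma ich (hA1 : Assumption1R A B Mv) (hA2 : Mv ⬝ᵥ Mv = 1) (hc : 0 ≤ c) (hn : 0 < n)
    {p : ℝ × ℝ} (hp : IsInvariancyInterval A B Mv c d p.1 p.2) :
    ∃ i, ICharge B Mv c d p i := by
  obtain ⟨u0, hu0⟩ := inv_const A B Mv c d hA1 hA2 hc hp
  have hv0 : (p.1 + p.2) / 2 ∈ Set.Ioo p.1 p.2 := ⟨by linarith [hp.1.1], by linarith [hp.1.1]⟩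
  have hΘ := hp.1.2.1 hv0
  obtain ⟨ρ, y₀, hρ, hopt₀, hval₀⟩ := att A B Mv c d hA1 hA2 hc hΘ
  have hpsi0 : PsiR B Mv c d ((p.1 + p.2) / 2) = {u0} := hu0 _ hv0
  by_cases hb0 : B 0 ⬝ᵥ c = 0
  · refine ⟨⟨0, hn⟩, u0, hu0, Or.inr ⟨hb0, ?_⟩⟩
    have h0opt := zero_opt (c := c) (d := d) hρ hb0
    have hm : (Mv ⬝ᵥ (0 : Fin n → ℝ) - Mv ⬝ᵥ c) ∈ PsiR B Mv c d ((p.1 + p.2) / 2) :=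
      (psi_mem B Mv c d _ _).mpr ⟨0, h0opt, rfl⟩
    rw [hpsi0] at hm
    have := Set.mem_singleton_iff.mp hm
    rw [dotProduct_zero] at this
    linarith
  · have hsupp : ∀ i, y₀ i ≠ 0 → (d + ((p.1 + p.2) / 2) • Mv) i = ρ * B 0 i :=
      comp_supp hρ hopt₀.1.1 (by rw [hval₀, hopt₀.1.2])
    rcases key (B 0) Mv c hb0 (fun i => (d + ((p.1 + p.2) / 2) • Mv) i = ρ * B 0 i) y₀
        hopt₀.1.1 hsupp hopt₀.1.2 with ⟨z, h1, h2, h3, h4⟩ | ⟨k, hEk, hkpos, hkey⟩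
    · exfalso
      have hcz := ray_cost_zero h2 h3
      have hopt1 : SOpt (B 0) Mv c d ((p.1 + p.2) / 2) (y₀ + z) := by
        refine ⟨⟨fun i => add_nonneg (hopt₀.1.1 i) (h1 i), ?_⟩, fun y' hy' => ?_⟩
        · rw [dotProduct_add, h3, add_zero]
          exact hopt₀.1.2
        · rw [dotProduct_add, hcz, add_zero]
          exact hopt₀.2 y' hy'
      have e1 : (Mv ⬝ᵥ y₀ - Mv ⬝ᵥ c) ∈ PsiR B Mv c d ((p.1 + p.2) / 2) :=
        (psi_mem B Mv c d _ _).mpr ⟨y₀, hopt₀, rfl⟩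
      have e2 : (Mv ⬝ᵥ (y₀ + z) - Mv ⬝ᵥ c) ∈ PsiR B Mv c d ((p.1 + p.2) / 2) :=
        (psi_mem B Mv c d _ _).mpr ⟨y₀ + z, hopt1, rfl⟩
      rw [hpsi0] at e1 e2
      have e1' := Set.mem_singleton_iff.mp e1
      have e2' := Set.mem_singleton_iff.mp e2
      rw [dotProduct_add] at e2'
      linarith
    · have hver := vertex_opt hρ hEk hkpos
      refine ⟨k, u0, hu0, Or.inl ⟨hkpos, ?_⟩⟩
      have hm : (Mv ⬝ᵥ ((B 0 ⬝ᵥ c / B 0 k) • e k) - Mv ⬝ᵥ c) ∈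
          PsiR B Mv c d ((p.1 + p.2) / 2) :=
        (psi_mem B Mv c d _ _).mpr ⟨_, hver.1, rfl⟩
      rw [hpsi0] at hm
      have := Set.mem_singleton_iff.mp hm
      rw [hver.2] at this
      linarith

lemma iinj (hA1 : Assumption1R A B Mv) (hA2 : Mv ⬝ᵥ Mv = 1) (hc : 0 ≤ c)
    {p p' : ℝ × ℝ} {i : Fin n}
    (hp : IsInvariancyInterval A B Mv c d p.1 p.2)
    (hp' : IsInvariancyInterval A B Mv c d p'.1 p'.2)
    (h1 : ICharge B Mv c d p i) (h2 : ICharge B Mv c d p' i) : p = p' := by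
  by_contra hne
  obtain ⟨u0, hu0, hcl⟩ := h1
  obtain ⟨u0', hu0', hcl'⟩ := h2
  have hne2 : ¬(p.1 = p'.1 ∧ p.2 = p'.2) := fun h => hne (Prod.ext h.1 h.2)
  have hneu := inv_value_ne A B Mv c d hA1 hA2 hc hp hp' hu0 hu0' hne2
  rcases hcl with ⟨hpos, hval⟩ | ⟨hb0, hval⟩ <;>
    rcases hcl' with ⟨hpos', hval'⟩ | ⟨hb0', hval'⟩
  · exact hneu (by linarith)
  · rw [hb0', mul_zero] at hpos
    exact lt_irrefl 0 hpos
  · rw [hb0, mul_zero] at hpos'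
    exact lt_irrefl 0 hpos'
  · exact hneu (hval.trans hval'.symm)

end Invariancy

end ThetaPAux

open ThetaPAux in
/-- With `l = r = 1`, the primal projection interval `Θ_P` contains at most `n`
transition points and at most `n` invariancy intervals. -/
theorem ThetaP_at_most_n {m n : ℕ}
    (A : Matrix (Fin m) (Fin n) ℝ) (B : Matrix (Fin 1) (Fin n) ℝ)
    (Mv c d : Fin n → ℝ) (hd : 0 ≤ d) (hc : 0 ≤ c)
    (hA1 : Assumption1R A B Mv) (hA2 : Mv ⬝ᵥ Mv = 1) :
    ({v : ℝ | IsTransitionPoint A B Mv c d v}.Finite ∧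
        {v : ℝ | IsTransitionPoint A B Mv c d v}.ncard ≤ n) ∧
      ({p : ℝ × ℝ | IsInvariancyInterval A B Mv c d p.1 p.2}.Finite ∧
        {p : ℝ × ℝ | IsInvariancyInterval A B Mv c d p.1 p.2}.ncard ≤ n) := by
  have hn : 0 < n := by
    rcases Nat.eq_zero_or_pos n with h | h
    · exfalso
      subst h
      simp [dotProduct] at hA2
    · exact h
  constructor
  · exact ThetaPAux.count_le _ (ThetaPAux.TCharge (B 0) Mv c d)
      (fun v hv => ThetaPAux.tex A B Mv c d hA1 hA2 hc hv)
      (fun x hx y hy i h1 h2 => ThetaPAux.tinj A B Mv c d hA1 hA2 hc hx hy h1 h2) hn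
  · exact ThetaPAux.count_le _ (ThetaPAux.ICharge B Mv c d)
      (fun p hp => ThetaPAux.ich A B Mv c d hA1 hA2 hc hn hp)
      (fun p hp p' hp' i h1 h2 => ThetaPAux.iinj A B Mv c d hA1 hA2 hc hp hp' h1 h2) hn
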